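/- Positivity of the solution: under the hypotheses that 0 < α < 1/2, f : ℝ → ℝ is continuous with 0 < c₁ ≤ f ≤ c₂, h : [0,T] → ℝ is continuous with h ≥ 0, and λ > 0, any continuous u : [0,T] → ℝ satisfying u(t) = ∫₀^t (t−s)^{2α−1}/Γ(2α) · ( λ f(u(s))/(∫₀^T f(u(x)) dx)² + h(s) ) ds is nonnegative on [0,T], and strictly positive on (0,T]: in fact u(t) ≥ λ c₁/(c₂T)² · t^{2α}/Γ(2α+1) for all t ∈ [0,T]. -/

import Mathlib

theorem stmt_15 (α T c₁ c₂ lam : ℝ)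
    (hα : 0 < α) (hα' : α < 1 / 2) (hT : 0 < T) (hlam : 0 < lam)
    (hc₁ : 0 < c₁) (hc : c₁ ≤ c₂)
    (f : ℝ → ℝ) (hfc : Continuous f) (hf : ∀ x, c₁ ≤ f x ∧ f x ≤ c₂)
    (h : ℝ → ℝ) (hhc : ContinuousOn h (Set.Icc 0 T))
    (hh0 : ∀ s ∈ Set.Icc (0:ℝ) T, 0 ≤ h s)
    (u : ℝ → ℝ) (hu : ContinuousOn u (Set.Icc 0 T))
    (heq : ∀ t ∈ Set.Icc (0:ℝ) T,
      u t = ∫ s in (0:ℝ)..t, (t - s) ^ (2 * α - 1) / Real.Gamma (2 * α) *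
          (lam * f (u s) / (∫ x in (0:ℝ)..T, f (u x)) ^ 2 + h s)) :
    ∀ t ∈ Set.Icc (0:ℝ) T,
      lam * c₁ / (c₂ * T) ^ 2 * (t ^ (2 * α) / Real.Gamma (2 * α + 1)) ≤ u t := by
  intro t ht
  obtain ⟨ht0, htT⟩ := ht
  set p : ℝ := 2 * α - 1 with hp_def
  have hp : -1 < p := by simp [hp_def]; linarith
  have h2α : 0 < 2 * α := by linarith
  have hΓ : 0 < Real.Gamma (2 * α) := Real.Gamma_pos_of_pos h2α
  have hIcc : Set.uIcc (0:ℝ) T = Set.Icc 0 T := Set.uIcc_of_le hT.le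
  have hfu : ContinuousOn (fun x => f (u x)) (Set.Icc 0 T) :=
    hfc.comp_continuousOn hu
  have hI_int : IntervalIntegrable (fun x => f (u x)) MeasureTheory.volume 0 T := by
    apply ContinuousOn.intervalIntegrable; rw [hIcc]; exact hfu
  set I : ℝ := ∫ x in (0:ℝ)..T, f (u x) with hI_def
  have hI_lb : c₁ * T ≤ I := by
    have := intervalIntegral.integral_mono_on hT.le
      (intervalIntegrable_const (c := c₁)) hI_int (fun x _ => (hf (u x)).1)
    simpa [mul_comm] using this
  have hI_ub : I ≤ c₂ * T := by
    have := intervalIntegral.integral_mono_on hT.le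
      hI_int (intervalIntegrable_const (c := c₂)) (fun x _ => (hf (u x)).2)
    simpa [mul_comm] using this
  have hI_pos : 0 < I := lt_of_lt_of_le (by positivity) hI_lb
  set K : ℝ := lam * c₁ / (c₂ * T) ^ 2 with hK_def
  have hK : 0 < K := by
    apply div_pos (by positivity)
    have : 0 < c₂ := lt_of_lt_of_le hc₁ hc
    positivity
  -- integrability of (t - s)^p on [0,t]
  have hrpow : IntervalIntegrable (fun s => (t - s) ^ p) MeasureTheory.volume 0 t := by
    have h1 : IntervalIntegrable (fun x : ℝ => x ^ p) MeasureTheory.volume 0 t :=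
      intervalIntegral.intervalIntegrable_rpow' hp
    have := h1.comp_sub_left t
    simpa using this.symm
  have hg_cont : ContinuousOn (fun s => lam * f (u s) / I ^ 2 + h s) (Set.uIcc 0 t) := by
    have hsub : Set.uIcc (0:ℝ) t ⊆ Set.Icc 0 T := by
      rw [Set.uIcc_of_le ht0]
      exact Set.Icc_subset_Icc le_rfl htT
    apply ContinuousOn.add
    · exact (((continuousOn_const.mul (hfu.mono hsub)).div_const _))
    · exact hhc.mono hsub
  have hlow_int : IntervalIntegrable
      (fun s => (t - s) ^ p / Real.Gamma (2 * α) * K) MeasureTheory.volume 0 t :=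
    ((hrpow.div_const _).mul_const _)
  have hup_int : IntervalIntegrable
      (fun s => (t - s) ^ p / Real.Gamma (2 * α) * (lam * f (u s) / I ^ 2 + h s))
      MeasureTheory.volume 0 t :=
    (hrpow.div_const _).mul_continuousOn hg_cont
  have hmono : ∀ s ∈ Set.Icc 0 t,
      (t - s) ^ p / Real.Gamma (2 * α) * K ≤
      (t - s) ^ p / Real.Gamma (2 * α) * (lam * f (u s) / I ^ 2 + h s) := by
    intro s hs
    have hts : (0:ℝ) ≤ t - s := by linarith [hs.2]
    have hfac : 0 ≤ (t - s) ^ p / Real.Gamma (2 * α) := by positivity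
    apply mul_le_mul_of_nonneg_left _ hfac
    have hsT : s ∈ Set.Icc (0:ℝ) T := ⟨hs.1, le_trans hs.2 htT⟩
    have hh : 0 ≤ h s := hh0 s hsT
    have hdiv : K ≤ lam * f (u s) / I ^ 2 := by
      apply div_le_div₀ (by nlinarith [(hf (u s)).1])
        (by nlinarith [(hf (u s)).1]) (by positivity)
      nlinarith
    linarith
  have hint_le := intervalIntegral.integral_mono_on ht0 hlow_int hup_int hmono
  rw [heq t ⟨ht0, htT⟩]
  refine le_trans (le_of_eq ?_) hint_le
  -- compute the lower integral
  have hval : ∫ s in (0:ℝ)..t, (t - s) ^ p = t ^ (2 * α) / (2 * α) := by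
    have h1 : (∫ s in (0:ℝ)..t, (t - s) ^ p) = ∫ x in (t - t)..(t - 0), x ^ p :=
      intervalIntegral.integral_comp_sub_left (fun x : ℝ => x ^ p) t
    rw [h1]
    simp only [sub_self, sub_zero]
    rw [integral_rpow (Or.inl hp)]
    have h0 : (0:ℝ) ^ (p + 1) = 0 := Real.zero_rpow (by simp [hp_def]; linarith)
    have hpe : p + 1 = 2 * α := by ring
    rw [h0, hpe]; ring
  have hΓ1 : Real.Gamma (2 * α + 1) = 2 * α * Real.Gamma (2 * α) :=
    Real.Gamma_add_one (ne_of_gt h2α)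
  rw [intervalIntegral.integral_mul_const, intervalIntegral.integral_div, hval, hΓ1]
  field_simp
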